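/- arXiv:1607.03746 — 2 statements merged into one kernel-verified Lean document; each statement's English description precedes it below -/
import Mathlib

section
/- (Addition formula, two-parameter case) For every integer n ≥ 0, every integer r ≥ 1, all integers k_1,…,k_r, all positive reals a, b with ab > 1, and all reals x, y, one has B_n^{(k_1,…,k_r)}(x+y;a,b) = ∑_{i=0}^{n} C(n,i) r^{n−i} B_i^{(k_1,…,k_r)}(x;a,b) y^{n−i}. -/
open Nat Finset

/-- The multiple polylogarithm. -/
noncomputable def multiPolylog (r : ℕ) (k : Fin r → ℤ) (z : ℝ) : ℝ :=
  ∑' m : Fin r → ℕ, if StrictMono m ∧ ∀ i, 0 < m i then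
    z ^ (Finset.univ.sup m) / ∏ j, ((m j : ℝ) ^ (k j)) else 0

/-- If a real power series sums to `0` at every nonzero point of a punctured neighborhood
of `0`, then all its coefficients vanish. -/
lemma aux_coeff_zero {c : ℕ → ℝ} {ε : ℝ} (hε : 0 < ε)
    (h : ∀ t : ℝ, t ≠ 0 → |t| < ε → HasSum (fun n => c n * t ^ n) 0) :
    ∀ n, c n = 0 := by
  set F := FormalMultilinearSeries.ofScalars ℝ c with hF
  have ht0 : (0:ℝ) < ε / 2 := by positivity
  have habs : |ε / 2| < ε := by rw [abs_of_pos ht0]; linarith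
  have hs : Summable (fun m => c m * (ε / 2) ^ m) :=
    (h (ε / 2) (ne_of_gt ht0) habs).summable
  have htend : Filter.Tendsto (fun m => |c m * (ε / 2) ^ m|) Filter.atTop (nhds 0) := by
    simpa using hs.tendsto_atTop_zero.abs
  obtain ⟨C, hC⟩ := htend.bddAbove_range
  have hC' : ∀ m, |c m * (ε / 2) ^ m| ≤ C := fun m => hC (Set.mem_range_self m)
  have hrad : 0 < F.radius := by
    set r' : NNReal := ⟨ε / 2, ht0.le⟩ with hr'
    have hle : (r' : ENNReal) ≤ F.radius := by
      apply F.le_radius_of_bound C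
      intro m
      rw [FormalMultilinearSeries.ofScalars_norm, Real.norm_eq_abs]
      calc |c m| * (r' : ℝ) ^ m = |c m * (ε / 2) ^ m| := by
            rw [abs_mul, abs_pow, abs_of_pos ht0]; rfl
        _ ≤ C := hC' m
    refine lt_of_lt_of_le ?_ hle
    rw [ENNReal.coe_pos]
    exact_mod_cast ht0
  have hball : HasFPowerSeriesOnBall F.sum F 0 F.radius :=
    F.hasFPowerSeriesOnBall hrad
  have hsum_eq : ∀ t : ℝ, F.sum t = ∑' m, c m * t ^ m := by
    intro t
    simpa [smul_eq_mul, FormalMultilinearSeries.ofScalarsSum] using FormalMultilinearSeries.ofScalars_sum_eq c t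
  have hzero : ∀ t : ℝ, t ≠ 0 → |t| < ε → F.sum t = 0 := by
    intro t ht htε
    rw [hsum_eq t, (h t ht htε).tsum_eq]
  -- continuity at 0 gives F.sum 0 = 0
  have hcont : ContinuousAt F.sum 0 := by
    have h0mem : (0:ℝ) ∈ Metric.eball (0:ℝ) F.radius := by
      simp [Metric.mem_eball, hrad]
    exact (hball.continuousOn).continuousAt (Metric.isOpen_eball.mem_nhds h0mem)
  have hT1 : Filter.Tendsto F.sum (nhdsWithin (0:ℝ) {(0:ℝ)}ᶜ) (nhds (F.sum 0)) :=
    hcont.tendsto.mono_left nhdsWithin_le_nhds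
  have hT2 : Filter.Tendsto F.sum (nhdsWithin (0:ℝ) {(0:ℝ)}ᶜ) (nhds 0) := by
    apply Filter.Tendsto.congr' _ tendsto_const_nhds
    have hball' : ∀ᶠ t in nhdsWithin (0:ℝ) {(0:ℝ)}ᶜ, |t| < ε ∧ t ≠ 0 := by
      have : ∀ᶠ t in nhds (0:ℝ), |t| < ε := by
        have := Metric.ball_mem_nhds (0:ℝ) hε
        filter_upwards [this] with t ht
        simpa [Real.dist_eq] using ht
      filter_upwards [self_mem_nhdsWithin, this.filter_mono nhdsWithin_le_nhds] with t ht h2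
      exact ⟨h2, ht⟩
    filter_upwards [hball'] with t ⟨h1', h2'⟩
    exact (hzero t h2' h1').symm
  have hF0 : F.sum 0 = 0 := tendsto_nhds_unique hT1 hT2
  have heq : ∀ᶠ t in nhds (0:ℝ), F.sum t = (fun _ => (0:ℝ)) t := by
    filter_upwards [Metric.ball_mem_nhds (0:ℝ) hε] with t ht
    rcases eq_or_ne t 0 with rfl | ht0'
    · exact hF0
    · exact hzero t ht0' (by simpa [Real.dist_eq] using ht)
  have hAt : HasFPowerSeriesAt F.sum F 0 := hball.hasFPowerSeriesAt
  have hconst : HasFPowerSeriesAt (fun _ => (0:ℝ))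
      (constFormalMultilinearSeries ℝ ℝ (0:ℝ)) 0 := hasFPowerSeriesAt_const
  have hFeq : F = constFormalMultilinearSeries ℝ ℝ (0:ℝ) :=
    hAt.eq_formalMultilinearSeries_of_eventually hconst heq
  have : F = 0 := by rw [hFeq, constFormalMultilinearSeries_zero]
  intro m
  have := (FormalMultilinearSeries.ofScalars_series_eq_zero (𝕜 := ℝ) ℝ).mp this
  exact congrFun this m

/-- Addition formula, two-parameter case:
`B_n^{(k_1,…,k_r)}(x+y;a,b) = ∑_{i=0}^{n} C(n,i) r^{n-i} B_i^{(k_1,…,k_r)}(x;a,b) y^{n-i}`. -/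
theorem statement8
    (r : ℕ) (hr : 1 ≤ r) (k : Fin r → ℤ)
    (a b : ℝ) (ha : 0 < a) (hb : 0 < b) (hab : 1 < a * b)
    (B : ℝ → ℕ → ℝ)
    (hB : ∀ x : ℝ, ∃ ε > 0, ∀ t : ℝ, t ≠ 0 → |t| < ε →
      HasSum (fun n : ℕ => B x n * t ^ n / (n ! : ℝ))
        (multiPolylog r k (1 - (a * b) ^ (-t)) / (b ^ t - a ^ (-t)) ^ r *
          Real.exp ((r : ℝ) * x * t)))
    (x y : ℝ) (n : ℕ) :
    B (x + y) n = ∑ i ∈ Finset.range (n + 1),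
      (n.choose i : ℝ) * (r : ℝ) ^ (n - i) * B x i * y ^ (n - i) := by
  obtain ⟨ε₁, hε₁, h₁⟩ := hB (x + y)
  obtain ⟨ε₂, hε₂, h₂⟩ := hB x
  set L : ℝ → ℝ := fun t => multiPolylog r k (1 - (a * b) ^ (-t)) / (b ^ t - a ^ (-t)) ^ r
    with hL
  set c : ℕ → ℝ := fun i => B x i / i ! with hc
  set d : ℕ → ℝ := fun j => ((r : ℝ) * y) ^ j / j ! with hd
  set e : ℕ → ℝ := fun m => B (x + y) m / m ! with he
  set diag : ℕ → ℝ := fun m => ∑ p ∈ Finset.HasAntidiagonal.antidiagonal m, c p.1 * d p.2 with hdiag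
  obtain ⟨t₀, ht₀, ht₀₁, ht₀₂⟩ : ∃ t₀ : ℝ, 0 < t₀ ∧ t₀ < ε₁ ∧ t₀ < ε₂ := by
    refine ⟨min ε₁ ε₂ / 2, by positivity, ?_, ?_⟩
    · have h := min_le_left ε₁ ε₂
      have h' : 0 < min ε₁ ε₂ := lt_min hε₁ hε₂
      linarith
    · have h := min_le_right ε₁ ε₂
      have h' : 0 < min ε₁ ε₂ := lt_min hε₁ hε₂
      linarith
  -- boundedness of c m * t₀^m
  have hcs : Summable (fun m => c m * t₀ ^ m) := by
    have := (h₂ t₀ (ne_of_gt ht₀) (by rw [abs_of_pos ht₀]; exact ht₀₂)).summable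
    simpa [hc, div_mul_eq_mul_div] using this
  obtain ⟨C, hC⟩ := (by simpa using hcs.tendsto_atTop_zero.abs :
    Filter.Tendsto (fun m => |c m * t₀ ^ m|) Filter.atTop (nhds 0)).bddAbove_range
  have hC' : ∀ m, |c m * t₀ ^ m| ≤ C := fun m => hC (Set.mem_range_self m)
  -- summable norms
  have hnormc : ∀ t : ℝ, |t| < t₀ → Summable (fun m => ‖c m * t ^ m‖) := by
    intro t ht
    have hq0 : 0 ≤ |t| / t₀ := by positivity
    have hq1 : |t| / t₀ < 1 := (div_lt_one ht₀).mpr ht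
    apply Summable.of_nonneg_of_le (fun m => norm_nonneg _) _
      ((summable_geometric_of_lt_one hq0 hq1).mul_left C)
    intro m
    have ht₀ne : t₀ ^ m ≠ 0 := pow_ne_zero _ (ne_of_gt ht₀)
    have key : ‖c m * t ^ m‖ = |c m * t₀ ^ m| * (|t| / t₀) ^ m := by
      rw [Real.norm_eq_abs, abs_mul, abs_mul, abs_pow, abs_pow, abs_of_pos ht₀, div_pow,
        mul_assoc, ← mul_div_assoc, mul_div_cancel_left₀ _ ht₀ne]
    rw [key]
    exact mul_le_mul_of_nonneg_right (hC' m) (by positivity)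
  have hnormd : ∀ t : ℝ, Summable (fun j => ‖d j * t ^ j‖) := by
    intro t
    have : Summable (fun j => |(r : ℝ) * y * t| ^ j / j !) :=
      Real.summable_pow_div_factorial _
    apply Summable.of_nonneg_of_le (fun j => norm_nonneg _) _ this
    intro j
    have : d j * t ^ j = ((r : ℝ) * y * t) ^ j / j ! := by
      rw [hd]; rw [mul_pow, mul_pow]; ring
    rw [this, Real.norm_eq_abs, abs_div, abs_pow, abs_of_nonneg (by positivity : (0:ℝ) ≤ (j ! : ℝ))]
  -- key identity for coefficients
  have hkey : ∀ m, e m = diag m := by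
    have hzero : ∀ t : ℝ, t ≠ 0 → |t| < t₀ →
        HasSum (fun m => (e m - diag m) * t ^ m) 0 := by
      intro t ht htlt
      have hct : HasSum (fun m => c m * t ^ m) (L t * Real.exp ((r : ℝ) * x * t)) := by
        have := h₂ t ht (htlt.trans ht₀₂)
        simpa [hc, hL, div_mul_eq_mul_div] using this
      have het : HasSum (fun m => e m * t ^ m) (L t * Real.exp ((r : ℝ) * (x + y) * t)) := by
        have := h₁ t ht (htlt.trans ht₀₁)
        simpa [he, hL, div_mul_eq_mul_div] using this
      have hdt : HasSum (fun j => d j * t ^ j) (Real.exp ((r : ℝ) * y * t)) := by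
        have hexp := NormedSpace.expSeries_div_hasSum_exp ((r : ℝ) * y * t)
        rw [← Real.exp_eq_exp_ℝ] at hexp
        have : (fun j => d j * t ^ j) = fun j => ((r : ℝ) * y * t) ^ j / j ! := by
          funext j; rw [hd]; rw [mul_pow, mul_pow]; ring
        rw [this]
        exact hexp
      have hfn := hnormc t htlt
      have hgn := hnormd t
      -- Cauchy product
      have hsum : Summable (fun m => ∑ p ∈ Finset.HasAntidiagonal.antidiagonal m,
          (c p.1 * t ^ p.1) * (d p.2 * t ^ p.2)) :=
        (summable_norm_sum_mul_antidiagonal_of_summable_norm hfn hgn).of_norm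
      have htsum := tsum_mul_tsum_eq_tsum_sum_antidiagonal_of_summable_norm hfn hgn
      rw [hct.tsum_eq, hdt.tsum_eq] at htsum
      have hprod : HasSum (fun m => ∑ p ∈ Finset.HasAntidiagonal.antidiagonal m,
          (c p.1 * t ^ p.1) * (d p.2 * t ^ p.2))
          (L t * Real.exp ((r : ℝ) * x * t) * Real.exp ((r : ℝ) * y * t)) := by
        rw [htsum]
        exact hsum.hasSum
      have hdiag_eq : (fun m => ∑ p ∈ Finset.HasAntidiagonal.antidiagonal m,
          (c p.1 * t ^ p.1) * (d p.2 * t ^ p.2)) = fun m => diag m * t ^ m := by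
        funext m
        rw [hdiag, Finset.sum_mul]
        apply Finset.sum_congr rfl
        intro p hp
        have : p.1 + p.2 = m := Finset.HasAntidiagonal.mem_antidiagonal.mp hp
        rw [← this, pow_add]
        ring
      rw [hdiag_eq] at hprod
      have hexp_eq : L t * Real.exp ((r : ℝ) * x * t) * Real.exp ((r : ℝ) * y * t)
          = L t * Real.exp ((r : ℝ) * (x + y) * t) := by
        rw [mul_assoc, ← Real.exp_add]
        ring_nf
      rw [hexp_eq] at hprod
      have := het.sub hprod
      simpa [sub_mul] using this
    intro m
    have := aux_coeff_zero ht₀ hzero m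
    linarith
  -- conclude
  have hne : (n ! : ℝ) ≠ 0 := Nat.cast_ne_zero.mpr (Nat.factorial_ne_zero n)
  have hBn : B (x + y) n =
      (n ! : ℝ) * ∑ p ∈ Finset.HasAntidiagonal.antidiagonal n, c p.1 * d p.2 := by
    have h' : B (x + y) n / (n ! : ℝ) = ∑ p ∈ Finset.HasAntidiagonal.antidiagonal n, c p.1 * d p.2 := hkey n
    rw [div_eq_iff hne] at h'
    rw [h', mul_comm]
  rw [hBn, Finset.Nat.sum_antidiagonal_eq_sum_range_succ_mk, Finset.mul_sum]
  apply Finset.sum_congr rfl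
  intro i hi
  have hin : i ≤ n := Nat.lt_succ_iff.mp (Finset.mem_range.mp hi)
  simp only [hc, hd]
  rw [Nat.cast_choose ℝ hin, mul_pow]
  have h1 : (i ! : ℝ) ≠ 0 := Nat.cast_ne_zero.mpr (Nat.factorial_ne_zero i)
  have h2' : ((n - i)! : ℝ) ≠ 0 := Nat.cast_ne_zero.mpr (Nat.factorial_ne_zero (n - i))
  field_simp
end

section
/- For every integer n ≥ 0, every integer r ≥ 1, all integers k_1,…,k_r, and every real a > r−1, the Hurwitz–Lerch type multi poly-Bernoulli numbers satisfy B_{n,a}^{(k_1,…,k_r)} = ∑_{0≤m_1≤m_2≤⋯≤m_r≤n} (−1)^{n+m_r} · m_r! · S(n, m_r) / ((m_1+a−r+1)^{k_1} (m_2+a−r+2)^{k_2} ⋯ (m_r+a)^{k_r}), where S(n,m) denotes the Stirling number of the second kind. -/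
open Nat Finset Filter

/-- The generalized Hurwitz–Lerch multiple zeta function
`Φ_{(k_1,…,k_r)}(z,a) = ∑_{0≤m_1≤⋯≤m_r} z^{m_r}/∏_{j=1}^r (m_j + a - r + j)^{k_j}`. -/
noncomputable def hlMultiZeta (r : ℕ) (k : Fin r → ℤ) (z a : ℝ) : ℝ :=
  ∑' m : Fin r → ℕ, if Monotone m then
    z ^ (Finset.univ.sup m) /
      ∏ j, (((m j : ℝ) + a - (r : ℝ) + ((j : ℕ) : ℝ) + 1) ^ (k j)) else 0

/-- Stirling numbers of the second kind. -/
def stirling2 : ℕ → ℕ → ℕ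
  | 0, 0 => 1
  | 0, _ + 1 => 0
  | _ + 1, 0 => 0
  | n + 1, k + 1 => (k + 1) * stirling2 n (k + 1) + stirling2 n k

lemma stirling2_eq_zero : ∀ {n M : ℕ}, n < M → stirling2 n M = 0 := by
  intro n
  induction n with
  | zero => intro M hM; obtain ⟨M', rfl⟩ := Nat.exists_eq_add_of_lt hM; rfl
  | succ n ih =>
    intro M hM
    obtain ⟨M', rfl⟩ : ∃ M', M = M' + 1 := ⟨M - 1, by omega⟩
    show (M' + 1) * stirling2 n (M' + 1) + stirling2 n M' = 0
    rw [ih (by omega), ih (by omega)]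
    ring

lemma alt_sum_eq (n : ℕ) : ∀ M : ℕ,
    ∑ i ∈ range (M + 1), (-1 : ℝ) ^ i * (M.choose i : ℝ) * (i : ℝ) ^ n
      = (-1 : ℝ) ^ M * (M ! : ℝ) * (stirling2 n M : ℝ) := by
  induction n with
  | zero =>
    intro M
    have h := Int.alternating_sum_range_choose (n := M)
    have h' : ∑ i ∈ range (M + 1), (-1 : ℝ) ^ i * (M.choose i : ℝ)
        = if M = 0 then 1 else 0 := by
      have := congrArg (fun z : ℤ => (z : ℝ)) h
      push_cast at this
      simpa using this
    simp only [pow_zero, mul_one]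
    rw [h']
    cases M with
    | zero => simp [stirling2]
    | succ M' => simp [stirling2]
  | succ n ih =>
    intro M
    cases M with
    | zero => simp [stirling2]
    | succ M' =>
      -- key: per-term identity summed over range (M'+2)
      have key : ∑ i ∈ range (M' + 2), (-1 : ℝ) ^ i * ((M' + 1).choose i : ℝ) * (i : ℝ) ^ (n + 1)
          = (M' + 1 : ℝ) * ((∑ i ∈ range (M' + 2), (-1 : ℝ) ^ i * ((M' + 1).choose i : ℝ) * (i : ℝ) ^ n)
            - (∑ i ∈ range (M' + 1), (-1 : ℝ) ^ i * (M'.choose i : ℝ) * (i : ℝ) ^ n)) := by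
        have hext : ∑ i ∈ range (M' + 1), (-1 : ℝ) ^ i * (M'.choose i : ℝ) * (i : ℝ) ^ n
            = ∑ i ∈ range (M' + 2), (-1 : ℝ) ^ i * (M'.choose i : ℝ) * (i : ℝ) ^ n := by
          rw [Finset.sum_range_succ (n := M' + 1)]
          simp [Nat.choose_eq_zero_of_lt (by omega : M' < M' + 1)]
        rw [hext, mul_sub, Finset.mul_sum, Finset.mul_sum, ← Finset.sum_sub_distrib]
        refine Finset.sum_congr rfl fun i hi => ?_
        have hi' : i ≤ M' + 1 := by simpa [Nat.lt_succ_iff] using Finset.mem_range.mp hi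
        have hnat : (M' + 1) * M'.choose i = (M' + 1 - i) * (M' + 1).choose i := by
          calc (M' + 1) * M'.choose i
              = (M' + 1).choose (i + 1) * (i + 1) := Nat.add_one_mul_choose_eq M' i
            _ = (M' + 1).choose i * (M' + 1 - i) := Nat.choose_succ_right_eq (M' + 1) i
            _ = (M' + 1 - i) * (M' + 1).choose i := Nat.mul_comm _ _
        have hcast : (M' + 1 : ℝ) * (M'.choose i : ℝ)
            = ((M' + 1 : ℝ) - (i : ℝ)) * ((M' + 1).choose i : ℝ) := by
          have := congrArg (fun z : ℕ => (z : ℝ)) hnat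
          push_cast [Nat.cast_sub hi'] at this
          push_cast
          linarith [this]
        have : (M' + 1 : ℝ) * ((-1 : ℝ) ^ i * ((M' + 1).choose i : ℝ) * (i : ℝ) ^ n)
            - (M' + 1 : ℝ) * ((-1 : ℝ) ^ i * (M'.choose i : ℝ) * (i : ℝ) ^ n)
            = (-1 : ℝ) ^ i * ((M' + 1).choose i : ℝ) * ((i : ℝ) * (i : ℝ) ^ n) := by
          rw [show (M' + 1 : ℝ) * ((-1 : ℝ) ^ i * (M'.choose i : ℝ) * (i : ℝ) ^ n)
              = (-1 : ℝ) ^ i * ((M' + 1 : ℝ) * (M'.choose i : ℝ)) * (i : ℝ) ^ n by ring, hcast]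
          ring
        rw [_root_.pow_succ']
        linarith [this]
      rw [key, ih (M' + 1), ih M']
      show _ = (-1 : ℝ) ^ (M' + 1) * ((M' + 1)! : ℝ)
        * (((M' + 1) * stirling2 n (M' + 1) + stirling2 n M' : ℕ) : ℝ)
      push_cast [Nat.factorial_succ]
      ring


lemma hasSum_exp_real (x : ℝ) : HasSum (fun n => x ^ n / (n ! : ℝ)) (Real.exp x) := by
  rw [Real.exp_eq_exp_ℝ]
  exact NormedSpace.expSeries_div_hasSum_exp x

lemma lemmaA (M : ℕ) (t : ℝ) :
    HasSum (fun n : ℕ => (-1 : ℝ) ^ (n + M) * (M ! : ℝ) * (stirling2 n M : ℝ) * t ^ n / (n ! : ℝ))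
      ((1 - Real.exp (-t)) ^ M) := by
  have hterm : ∀ i : ℕ, HasSum
      (fun n : ℕ => ((-1 : ℝ) ^ i * (M.choose i : ℝ)) * ((-(i : ℝ) * t) ^ n / (n ! : ℝ)))
      (((-1 : ℝ) ^ i * (M.choose i : ℝ)) * Real.exp (-(i : ℝ) * t)) :=
    fun i => (hasSum_exp_real (-(i : ℝ) * t)).mul_left _
  have hsum := hasSum_sum (f := fun (i : ℕ) (n : ℕ) =>
      ((-1 : ℝ) ^ i * (M.choose i : ℝ)) * ((-(i : ℝ) * t) ^ n / (n ! : ℝ)))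
    (s := range (M + 1)) (fun i _ => hterm i)
  have hval : ∑ i ∈ range (M + 1), ((-1 : ℝ) ^ i * (M.choose i : ℝ)) * Real.exp (-(i : ℝ) * t)
      = (1 - Real.exp (-t)) ^ M := by
    have expand : (1 - Real.exp (-t)) ^ M = ((-Real.exp (-t)) + 1) ^ M := by ring
    rw [expand, add_pow]
    refine (Finset.sum_congr rfl fun i hi => ?_).symm
    rw [neg_pow, ← Real.exp_nat_mul]
    push_cast
    ring_nf
  rw [hval] at hsum
  refine hsum.congr_fun fun n => ?_
  simp only [mul_div_assoc']
  rw [← Finset.sum_div]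
  rw [show ∑ i ∈ range (M + 1), ((-1 : ℝ) ^ i * (M.choose i : ℝ)) * (-(i : ℝ) * t) ^ n
      = ((-1 : ℝ) ^ n * t ^ n) * ∑ i ∈ range (M + 1), (-1 : ℝ) ^ i * (M.choose i : ℝ) * (i : ℝ) ^ n by
    rw [Finset.mul_sum]; refine Finset.sum_congr rfl fun i _ => ?_
    rw [mul_pow, neg_pow]; ring]
  rw [alt_sum_eq n M, pow_add]
  ring

lemma summable_single (v : ℝ) (hv0 : 0 < v) (hv1 : v < 1) (N : ℕ) :
    Summable (fun i : ℕ => v ^ i * ((i : ℝ) + 1) ^ N) := by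
  have h0 : Summable (fun n : ℕ => (n : ℝ) ^ N * v ^ n) :=
    summable_pow_mul_geometric_of_norm_lt_one N (by rw [Real.norm_eq_abs, abs_of_pos hv0]; exact hv1)
  have h1 : Summable (fun n : ℕ => ((n + 1 : ℕ) : ℝ) ^ N * v ^ (n + 1)) :=
    (summable_nat_add_iff 1).2 h0
  have h2 := h1.mul_right v⁻¹
  refine h2.congr fun n => ?_
  push_cast
  rw [pow_succ]
  field_simp

set_option maxHeartbeats 1000000 in
lemma summable_pi_prod : ∀ (r : ℕ) (b : Fin r → ℕ → ℝ), (∀ j i, 0 ≤ b j i) →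
    (∀ j, Summable (b j)) → Summable (fun m : Fin r → ℕ => ∏ j, b j (m j)) := by
  intro r
  induction r with
  | zero => intro b _ _; simp only [Finset.univ_eq_empty, Finset.prod_empty]
            exact summable_of_finite_support (Set.toFinite _)
  | succ r ih =>
    intro b hb0 hbs
    let e : (ℕ × (Fin r → ℕ)) ≃ (Fin (r + 1) → ℕ) := Fin.consEquiv (fun _ => ℕ)
    rw [← e.summable_iff]
    have hmul : Summable (fun p : ℕ × (Fin r → ℕ) => b 0 p.1 * ∏ j : Fin r, b j.succ (p.2 j)) := by
      exact Summable.mul_of_nonneg (f := b 0)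
        (g := fun m : Fin r → ℕ => ∏ j : Fin r, b j.succ (m j)) (hbs 0)
        (ih (fun j => b j.succ) (fun j i => hb0 _ _) (fun j => hbs j.succ))
        (fun i => hb0 0 i) (fun m => Finset.prod_nonneg fun j _ => hb0 _ _)
    refine hmul.congr fun p => ?_
    show b 0 p.1 * ∏ j : Fin r, b j.succ (p.2 j) = ∏ j : Fin (r+1), b j (e p j)
    rw [Fin.prod_univ_succ]
    simp only [e, Fin.consEquiv, Equiv.coe_fn_mk, Fin.cons_zero, Fin.cons_succ]

lemma lemmaB (r : ℕ) (hr : 1 ≤ r) (k : Fin r → ℤ) (a : ℝ) (ha : (r : ℝ) - 1 < a)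
    (w : ℝ) (hw0 : 0 < w) (hw1 : w < 1) :
    Summable (fun m : Fin r → ℕ => if Monotone m then
      w ^ (Finset.univ.sup m) /
        ∏ j, (((m j : ℝ) + a - (r : ℝ) + ((j : ℕ) : ℝ) + 1) ^ (k j)) else 0) := by
  have hr0 : (0 : ℝ) < r := by exact_mod_cast hr
  have hr1 : (1 : ℝ) ≤ (r : ℝ) := by exact_mod_cast hr
  have ha0 : (0 : ℝ) ≤ a := by linarith
  set c : ℝ := a - r + 1 with hc_def
  have hc : 0 < c := by simp only [hc_def]; linarith
  set N : ℕ := Finset.univ.sup (fun j : Fin r => (-(k j)).toNat) with hN_def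
  set v : ℝ := w ^ ((r : ℝ)⁻¹) with hv_def
  have hv0 : 0 < v := Real.rpow_pos_of_pos hw0 _
  have hv1 : v < 1 := Real.rpow_lt_one hw0.le hw1 (by positivity)
  have hvr : v ^ (r : ℕ) = w := by
    rw [hv_def, ← Real.rpow_natCast (w ^ ((r : ℝ)⁻¹)) r, ← Real.rpow_mul hw0.le,
      inv_mul_cancel₀ (ne_of_gt hr0), Real.rpow_one]
  set Aj : Fin r → ℝ := fun j => (a + 1) ^ N + c ^ (-(k j)) with hAj_def
  have hAj0 : ∀ j, 0 < Aj j := fun j => by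
    have h1 : (0:ℝ) < c ^ (-(k j)) := zpow_pos hc _
    have h2 : (0:ℝ) ≤ (a+1) ^ N := by positivity
    simp only [hAj_def]; linarith
  -- positivity of factors
  have hx : ∀ (j : Fin r) (i : ℕ), c ≤ (i : ℝ) + a - (r : ℝ) + ((j : ℕ) : ℝ) + 1 := by
    intro j i
    have h1 : (0:ℝ) ≤ (i : ℝ) := Nat.cast_nonneg i
    have h2 : (0:ℝ) ≤ ((j : ℕ) : ℝ) := Nat.cast_nonneg _
    simp only [hc_def]; linarith
  have hx0 : ∀ (j : Fin r) (i : ℕ), (0:ℝ) < (i : ℝ) + a - (r : ℝ) + ((j : ℕ) : ℝ) + 1 :=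
    fun j i => lt_of_lt_of_le hc (hx j i)
  have hD : ∀ m : Fin r → ℕ, (0:ℝ) <
      ∏ j, (((m j : ℝ) + a - (r : ℝ) + ((j : ℕ) : ℝ) + 1) ^ (k j)) :=
    fun m => Finset.prod_pos fun j _ => zpow_pos (hx0 j (m j)) _
  -- per-factor bound
  have factor_bound : ∀ (j : Fin r) (i : ℕ),
      ((i : ℝ) + a - (r : ℝ) + ((j : ℕ) : ℝ) + 1) ^ (-(k j)) ≤ Aj j * ((i : ℝ) + 1) ^ N := by
    intro j i
    set x : ℝ := (i : ℝ) + a - (r : ℝ) + ((j : ℕ) : ℝ) + 1 with hx_def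
    have hxc : c ≤ x := hx j i
    have hxpos : 0 < x := hx0 j i
    have hi0 : (0:ℝ) ≤ (i : ℝ) := Nat.cast_nonneg i
    have hj1 : ((j : ℕ) : ℝ) + 1 ≤ (r : ℝ) := by
      have := j.isLt
      exact_mod_cast Nat.succ_le_of_lt this
    have hxle : x ≤ (a + 1) * ((i : ℝ) + 1) := by
      simp only [hx_def]; nlinarith
    have hone : (1:ℝ) ≤ (a + 1) * ((i : ℝ) + 1) := by nlinarith
    have hiN1 : (1:ℝ) ≤ ((i : ℝ) + 1) ^ N := one_le_pow₀ (by linarith)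
    rcases le_or_gt (k j) 0 with hk | hk
    · -- k j ≤ 0
      have hn : -(k j) = ((-(k j)).toNat : ℤ) := (Int.toNat_of_nonneg (by omega)).symm
      have hnN : (-(k j)).toNat ≤ N := Finset.le_sup (f := fun j : Fin r => (-(k j)).toNat) (Finset.mem_univ j)
      calc x ^ (-(k j)) = x ^ ((-(k j)).toNat : ℤ) := by rw [← hn]
        _ = x ^ ((-(k j)).toNat) := zpow_natCast x _
        _ ≤ ((a + 1) * ((i : ℝ) + 1)) ^ ((-(k j)).toNat) :=
            pow_le_pow_left₀ hxpos.le hxle _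
        _ ≤ ((a + 1) * ((i : ℝ) + 1)) ^ N := pow_le_pow_right₀ hone hnN
        _ = (a + 1) ^ N * ((i : ℝ) + 1) ^ N := mul_pow _ _ _
        _ ≤ Aj j * ((i : ℝ) + 1) ^ N := by
            have h1 : (0:ℝ) < c ^ (-(k j)) := zpow_pos hc _
            have : (a + 1) ^ N ≤ Aj j := by simp only [hAj_def]; linarith
            exact mul_le_mul_of_nonneg_right this (by linarith)
    · -- k j > 0
      have hkk : k j = ((k j).toNat : ℤ) := (Int.toNat_of_nonneg (by omega)).symm
      have hck : c ^ (k j) ≤ x ^ (k j) := by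
        rw [hkk, zpow_natCast, zpow_natCast]
        exact pow_le_pow_left₀ hc.le hxc _
      have hcpos : (0:ℝ) < c ^ (k j) := zpow_pos hc _
      calc x ^ (-(k j)) = (x ^ (k j))⁻¹ := zpow_neg x _
        _ ≤ (c ^ (k j))⁻¹ := by
            apply inv_anti₀ hcpos hck
        _ = c ^ (-(k j)) := (zpow_neg c _).symm
        _ ≤ Aj j := by
            have h2 : (0:ℝ) ≤ (a+1) ^ N := by positivity
            simp only [hAj_def]; linarith
        _ ≤ Aj j * ((i : ℝ) + 1) ^ N := le_mul_of_one_le_right (hAj0 j).le hiN1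
  -- majorant
  refine Summable.of_nonneg_of_le (fun m => ?_) (fun m => ?_)
    (summable_pi_prod r (fun j i => Aj j * (v ^ i * ((i : ℝ) + 1) ^ N))
      (fun j i => mul_nonneg (hAj0 j).le (by positivity))
      (fun j => (summable_single v hv0 hv1 N).mul_left (Aj j)))
  · by_cases hm : Monotone m
    · simp only [hm, if_true]
      exact div_nonneg (pow_nonneg hw0.le _) (hD m).le
    · simp [hm]
  · by_cases hm : Monotone m
    · simp only [hm, if_true]
      have hstep1 : w ^ (Finset.univ.sup m) ≤ ∏ j : Fin r, v ^ (m j) := by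
        rw [Finset.prod_pow_eq_pow_sum]
        have hsum_le : (∑ j : Fin r, m j) ≤ r * Finset.univ.sup m := by
          calc (∑ j : Fin r, m j) ≤ Finset.univ.card • Finset.univ.sup m :=
              Finset.sum_le_card_nsmul _ _ _ (fun j _ => Finset.le_sup (Finset.mem_univ j))
            _ = r * Finset.univ.sup m := by simp [Finset.card_univ, smul_eq_mul]
        calc w ^ (Finset.univ.sup m) = (v ^ (r : ℕ)) ^ (Finset.univ.sup m) := by rw [hvr]
          _ = v ^ (r * Finset.univ.sup m) := by rw [← pow_mul]
          _ ≤ v ^ (∑ j : Fin r, m j) := pow_le_pow_of_le_one hv0.le hv1.le hsum_le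
      have hstep2 : w ^ (Finset.univ.sup m) /
            (∏ j, (((m j : ℝ) + a - (r : ℝ) + ((j : ℕ) : ℝ) + 1) ^ (k j)))
          = w ^ (Finset.univ.sup m) *
            ∏ j, (((m j : ℝ) + a - (r : ℝ) + ((j : ℕ) : ℝ) + 1) ^ (-(k j))) := by
        rw [div_eq_mul_inv, ← Finset.prod_inv_distrib]
        congr 1
        exact Finset.prod_congr rfl fun j _ => (zpow_neg _ _).symm
      rw [hstep2]
      have hprod_le : ∏ j, (((m j : ℝ) + a - (r : ℝ) + ((j : ℕ) : ℝ) + 1) ^ (-(k j)))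
          ≤ ∏ j : Fin r, (Aj j * ((m j : ℝ) + 1) ^ N) :=
        Finset.prod_le_prod (fun j _ => (zpow_pos (hx0 j (m j)) _).le)
          (fun j _ => factor_bound j (m j))
      calc w ^ (Finset.univ.sup m) *
            ∏ j, (((m j : ℝ) + a - (r : ℝ) + ((j : ℕ) : ℝ) + 1) ^ (-(k j)))
          ≤ (∏ j : Fin r, v ^ (m j)) * ∏ j : Fin r, (Aj j * ((m j : ℝ) + 1) ^ N) := by
            apply mul_le_mul hstep1 hprod_le
              (Finset.prod_nonneg fun j _ => (zpow_pos (hx0 j (m j)) _).le)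
              (Finset.prod_nonneg fun j _ => (pow_pos hv0 _).le)
        _ = ∏ j : Fin r, (Aj j * (v ^ (m j) * ((m j : ℝ) + 1) ^ N)) := by
            rw [← Finset.prod_mul_distrib]
            exact Finset.prod_congr rfl fun j _ => by ring
    · simp only [hm, if_false]
      exact Finset.prod_nonneg fun j _ => by positivity

lemma main_hasSum (r : ℕ) (hr : 1 ≤ r) (k : Fin r → ℤ) (a : ℝ) (ha : (r : ℝ) - 1 < a)
    (t : ℝ) (ht0 : t ≠ 0) (ht : |t| < Real.log 2) :
    HasSum (fun n : ℕ =>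
      (∑ m ∈ Fintype.piFinset (fun _ : Fin r => Finset.range (n + 1)),
        if Monotone m then
          (-1 : ℝ) ^ (n + Finset.univ.sup m) * ((Finset.univ.sup m)! : ℝ) *
            (stirling2 n (Finset.univ.sup m) : ℝ) /
            ∏ j, (((m j : ℝ) + a - (r : ℝ) + ((j : ℕ) : ℝ) + 1) ^ (k j))
        else 0) * t ^ n / (n ! : ℝ))
      (hlMultiZeta r k (1 - Real.exp (-t)) a) := by
  have hr1 : (1 : ℝ) ≤ (r : ℝ) := by exact_mod_cast hr
  have hx0 : ∀ (j : Fin r) (i : ℕ), (0:ℝ) < (i : ℝ) + a - (r : ℝ) + ((j : ℕ) : ℝ) + 1 := by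
    intro j i
    have h1 : (0:ℝ) ≤ (i : ℝ) := Nat.cast_nonneg i
    have h2 : (0:ℝ) ≤ ((j : ℕ) : ℝ) := Nat.cast_nonneg _
    linarith
  have hD : ∀ m : Fin r → ℕ,
      (0:ℝ) < ∏ j, (((m j : ℝ) + a - (r : ℝ) + ((j : ℕ) : ℝ) + 1) ^ (k j)) :=
    fun m => Finset.prod_pos fun j _ => zpow_pos (hx0 j (m j)) _
  set D : (Fin r → ℕ) → ℝ :=
    fun m => ∏ j, (((m j : ℝ) + a - (r : ℝ) + ((j : ℕ) : ℝ) + 1) ^ (k j)) with hD_def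
  have hw0 : 0 < Real.exp |t| - 1 := by
    have : (1:ℝ) < Real.exp |t| := by
      rw [← Real.exp_zero]; exact Real.exp_lt_exp.mpr (abs_pos.mpr ht0)
    linarith
  have hw1 : Real.exp |t| - 1 < 1 := by
    have : Real.exp |t| < 2 := by
      calc Real.exp |t| < Real.exp (Real.log 2) := Real.exp_lt_exp.mpr ht
        _ = 2 := Real.exp_log two_pos
    linarith
  set g : (Fin r → ℕ) × ℕ → ℝ := fun p =>
    if Monotone p.1 then
      ((-1 : ℝ) ^ (p.2 + Finset.univ.sup p.1) * ((Finset.univ.sup p.1)! : ℝ) *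
        (stirling2 p.2 (Finset.univ.sup p.1) : ℝ) * t ^ p.2 / (p.2 ! : ℝ)) / D p.1
    else 0 with hg_def
  set h : (Fin r → ℕ) × ℕ → ℝ := fun p =>
    if Monotone p.1 then
      (((Finset.univ.sup p.1)! : ℝ) * (stirling2 p.2 (Finset.univ.sup p.1) : ℝ)
        * |t| ^ p.2 / (p.2 ! : ℝ)) / D p.1
    else 0 with hh_def
  -- HasSum for the absolute-value coefficients
  have posA : ∀ M : ℕ, HasSum (fun n : ℕ => (M ! : ℝ) * (stirling2 n M : ℝ) * |t| ^ n / (n ! : ℝ))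
      ((Real.exp |t| - 1) ^ M) := by
    intro M
    have h1 := (lemmaA M (-|t|)).mul_left ((-1 : ℝ) ^ M)
    have h2 : ((-1 : ℝ) ^ M) * (1 - Real.exp (-(-|t|))) ^ M = (Real.exp |t| - 1) ^ M := by
      rw [neg_neg, ← mul_pow]; ring_nf
    rw [h2] at h1
    refine h1.congr_fun fun n => ?_
    have hneg : (-|t|) ^ n = (-1:ℝ) ^ n * |t| ^ n := by rw [neg_pow]
    rw [hneg, pow_add]
    have hsq : ∀ K : ℕ, (-1:ℝ) ^ K * (-1:ℝ) ^ K = 1 := fun K => by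
      rw [← pow_add, ← two_mul, pow_mul]; norm_num
    field_simp
    rw [sq ((-1:ℝ) ^ M), sq ((-1:ℝ) ^ n), hsq M, hsq n]
    ring
  -- |g| = h
  have habs : ∀ p, |g p| = h p := by
    rintro ⟨m, n⟩
    by_cases hm : Monotone m
    · have hDm : (0:ℝ) < D m := hD m
      simp only [hg_def, hh_def, hm, if_true, abs_div, abs_mul, abs_pow, abs_neg, abs_one,
        one_pow, one_mul, Nat.abs_cast, abs_abs, abs_of_pos hDm]
    · simp [hg_def, hh_def, hm]
  have hnonneg : ∀ p, 0 ≤ h p := fun p => (habs p) ▸ (abs_nonneg (g p))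
  -- summability of h
  have hSumh : Summable h := by
    refine (summable_prod_of_nonneg hnonneg).2 ⟨fun m => ?_, ?_⟩
    · by_cases hm : Monotone m
      · refine ((posA (Finset.univ.sup m)).div_const (D m)).summable.congr fun n => ?_
        simp only [hh_def, hm, if_true]
      · refine summable_zero.congr fun n => ?_
        simp [hh_def, hm]
    · have hvals : ∀ m : Fin r → ℕ, ∑' n, h (m, n) =
          (if Monotone m then (Real.exp |t| - 1) ^ (Finset.univ.sup m) / D m else 0) := by
        intro m
        by_cases hm : Monotone m
        · rw [if_pos hm]
          rw [show (fun n => h (m, n)) = (fun n =>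
              ((((Finset.univ.sup m)!) : ℝ) * (stirling2 n (Finset.univ.sup m) : ℝ)
                * |t| ^ n / (n ! : ℝ)) / D m) from funext fun n => by
            simp only [hh_def, hm, if_true]]
          exact ((posA (Finset.univ.sup m)).div_const (D m)).tsum_eq
        · rw [if_neg hm]
          rw [show (fun n => h (m, n)) = (fun _ => (0:ℝ)) from funext fun n => by
            simp [hh_def, hm]]
          exact tsum_zero
      refine (lemmaB r hr k a ha _ hw0 hw1).congr fun m => ?_
      rw [hvals m]
  have hSumg : Summable g := summable_abs_iff.mp (hSumh.congr fun p => (habs p).symm)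
  have hG : HasSum g (∑' p, g p) := hSumg.hasSum
  set T : ℝ := ∑' p, g p with hT_def
  -- fiberwise over m
  have fiberM : ∀ m : Fin r → ℕ, HasSum (fun n => g (m, n))
      (if Monotone m then (1 - Real.exp (-t)) ^ (Finset.univ.sup m) / D m else 0) := by
    intro m
    by_cases hm : Monotone m
    · rw [if_pos hm]
      refine ((lemmaA (Finset.univ.sup m) t).div_const (D m)).congr_fun fun n => ?_
      simp only [hg_def, hm, if_true]
    · rw [if_neg hm]
      refine hasSum_zero.congr_fun fun n => ?_
      simp [hg_def, hm]
  have hHL : HasSum (fun m : Fin r → ℕ =>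
      if Monotone m then (1 - Real.exp (-t)) ^ (Finset.univ.sup m) / D m else 0) T :=
    hG.prod_fiberwise fiberM
  have hT : hlMultiZeta r k (1 - Real.exp (-t)) a = T := by
    rw [hlMultiZeta]
    exact hHL.tsum_eq
  -- fiberwise over n
  have hG' := (Equiv.prodComm ℕ (Fin r → ℕ)).hasSum_iff.mpr hG
  have fiberN : ∀ n : ℕ, HasSum (fun m : Fin r → ℕ => g (m, n))
      ((∑ m ∈ Fintype.piFinset (fun _ : Fin r => Finset.range (n + 1)),
        if Monotone m then
          (-1 : ℝ) ^ (n + Finset.univ.sup m) * ((Finset.univ.sup m)! : ℝ) *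
            (stirling2 n (Finset.univ.sup m) : ℝ) /
            ∏ j, (((m j : ℝ) + a - (r : ℝ) + ((j : ℕ) : ℝ) + 1) ^ (k j))
        else 0) * t ^ n / (n ! : ℝ)) := by
    intro n
    have hvanish : ∀ m : Fin r → ℕ,
        m ∉ Fintype.piFinset (fun _ : Fin r => Finset.range (n + 1)) → g (m, n) = 0 := by
      intro m hm
      by_cases hmono : Monotone m
      · have : ∃ j, m j ∉ Finset.range (n + 1) := by
          by_contra hcon
          push_neg at hcon
          exact hm (Fintype.mem_piFinset.mpr hcon)
        obtain ⟨j, hj⟩ := this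
        have hmj : n < m j := by simpa [Finset.mem_range, Nat.lt_succ_iff] using hj
        have hsup : n < Finset.univ.sup m :=
          lt_of_lt_of_le hmj (Finset.le_sup (Finset.mem_univ j))
        simp [hg_def, hmono, stirling2_eq_zero hsup]
      · simp [hg_def, hmono]
    have base := hasSum_sum_of_ne_finset_zero (L := SummationFilter.unconditional _) hvanish
    have hval : ∑ m ∈ Fintype.piFinset (fun _ : Fin r => Finset.range (n + 1)), g (m, n)
        = (∑ m ∈ Fintype.piFinset (fun _ : Fin r => Finset.range (n + 1)),
          if Monotone m then
            (-1 : ℝ) ^ (n + Finset.univ.sup m) * ((Finset.univ.sup m)! : ℝ) *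
              (stirling2 n (Finset.univ.sup m) : ℝ) /
              ∏ j, (((m j : ℝ) + a - (r : ℝ) + ((j : ℕ) : ℝ) + 1) ^ (k j))
          else 0) * t ^ n / (n ! : ℝ) := by
      rw [Finset.sum_mul, Finset.sum_div]
      refine Finset.sum_congr rfl fun m _ => ?_
      by_cases hm : Monotone m
      · simp only [hg_def, hm, if_true]
        have h1 : D m ≠ 0 := (hD m).ne'
        have h2 : (n ! : ℝ) ≠ 0 := Nat.cast_ne_zero.mpr (Nat.factorial_ne_zero n)
        show ((-1 : ℝ) ^ (n + Finset.univ.sup m) * ((Finset.univ.sup m)! : ℝ) *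
          (stirling2 n (Finset.univ.sup m) : ℝ) * t ^ n / (n ! : ℝ)) / D m
          = ((-1 : ℝ) ^ (n + Finset.univ.sup m) * ((Finset.univ.sup m)! : ℝ) *
            (stirling2 n (Finset.univ.sup m) : ℝ) / D m) * t ^ n / (n ! : ℝ)
        field_simp
      · simp [hg_def, hm]
    rw [← hval]
    exact base
  have hFinal : HasSum (fun n : ℕ =>
      (∑ m ∈ Fintype.piFinset (fun _ : Fin r => Finset.range (n + 1)),
        if Monotone m then
          (-1 : ℝ) ^ (n + Finset.univ.sup m) * ((Finset.univ.sup m)! : ℝ) *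
            (stirling2 n (Finset.univ.sup m) : ℝ) /
            ∏ j, (((m j : ℝ) + a - (r : ℝ) + ((j : ℕ) : ℝ) + 1) ^ (k j))
        else 0) * t ^ n / (n ! : ℝ)) T :=
    hG'.prod_fiberwise fiberN
  rw [hT]
  exact hFinal

lemma coeff_zero (d : ℕ → ℝ) (ε : ℝ) (hε : 0 < ε)
    (h : ∀ t : ℝ, t ≠ 0 → |t| < ε → HasSum (fun n => d n * t ^ n) 0) : ∀ n, d n = 0 := by
  set p := FormalMultilinearSeries.ofScalars ℝ d with hp_def
  have ht0 : (0:ℝ) < ε/2 := by linarith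
  have hsum := (h (ε/2) (ne_of_gt ht0) (by rw [abs_of_pos ht0]; linarith)).summable
  have htend : Tendsto (fun n => d n * (ε/2) ^ n) atTop (nhds 0) := hsum.tendsto_atTop_zero
  have hbig : (fun n => ‖p n‖ * (((ε/2 : ℝ).toNNReal : ℝ)) ^ n) =O[atTop] (fun _ => (1:ℝ)) := by
    have h1 : (fun n => ‖p n‖ * (((ε/2 : ℝ).toNNReal : ℝ)) ^ n)
        = fun n => ‖d n * (ε/2) ^ n‖ := by
      funext n
      rw [FormalMultilinearSeries.ofScalars_norm, Real.coe_toNNReal _ ht0.le, norm_mul,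
        norm_pow, Real.norm_eq_abs, Real.norm_eq_abs, abs_of_pos ht0]
    rw [h1]
    exact (htend.isBigO_one ℝ).norm_left
  have hrad : 0 < p.radius :=
    lt_of_lt_of_le (by exact_mod_cast Real.toNNReal_pos.mpr ht0)
      (p.le_radius_of_isBigO hbig)
  have hball := p.hasFPowerSeriesOnBall hrad
  have hat : HasFPowerSeriesAt p.sum p 0 := hball.hasFPowerSeriesAt
  have hps : ∀ t : ℝ, p.sum t = ∑' n, d n * t ^ n := fun t => by
    unfold FormalMultilinearSeries.sum
    exact tsum_congr fun n => by
      rw [hp_def, FormalMultilinearSeries.ofScalars_apply_eq, smul_eq_mul]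
  have hzero : ∀ t : ℝ, t ≠ 0 → |t| < ε → p.sum t = 0 := fun t h1 h2 => by
    rw [hps]; exact (h t h1 h2).tsum_eq
  have hc : ContinuousAt p.sum 0 := hat.continuousAt
  have hval0 : p.sum 0 = 0 := by
    have hev : ∀ᶠ t in nhdsWithin (0:ℝ) {(0:ℝ)}ᶜ, p.sum t = 0 := by
      have hmem : Metric.ball (0:ℝ) ε ∩ {(0:ℝ)}ᶜ ∈ nhdsWithin (0:ℝ) {(0:ℝ)}ᶜ :=
        Filter.inter_mem (nhdsWithin_le_nhds (Metric.ball_mem_nhds _ hε)) self_mem_nhdsWithin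
      filter_upwards [hmem] with t ht
      exact hzero t ht.2 (by simpa [Real.dist_eq] using ht.1)
    have h1 : Tendsto p.sum (nhdsWithin (0:ℝ) {(0:ℝ)}ᶜ) (nhds (p.sum 0)) :=
      hc.continuousWithinAt.tendsto
    have h2 : Tendsto p.sum (nhdsWithin (0:ℝ) {(0:ℝ)}ᶜ) (nhds 0) :=
      Tendsto.congr' (Filter.EventuallyEq.symm hev) tendsto_const_nhds
    exact tendsto_nhds_unique h1 h2
  have heq : p.sum =ᶠ[nhds (0:ℝ)] 0 := by
    filter_upwards [Metric.ball_mem_nhds (0:ℝ) hε] with t ht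
    rcases eq_or_ne t 0 with rfl | h0
    · simpa using hval0
    · simpa using hzero t h0 (by simpa [Real.dist_eq] using ht)
  have hp0 : p = 0 := hat.eq_zero_of_eventually heq
  intro n
  have hn : p n = 0 := by rw [hp0]; rfl
  exact (FormalMultilinearSeries.ofScalars_eq_zero ℝ n).mp hn

/-- the Hurwitz–Lerch type multi poly-Bernoulli numbers (with e.g.f.
`Φ(1−e^{−t},a)`) satisfy `B_{n,a}^{(k_1,…,k_r)} = ∑_{0≤m_1≤⋯≤m_r≤n} (−1)^{n+m_r} m_r! S(n,m_r) /
∏_{j=1}^r (m_j+a−r+j)^{k_j}`. -/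
theorem statement15
    (r : ℕ) (hr : 1 ≤ r) (k : Fin r → ℤ)
    (a : ℝ) (ha : (r : ℝ) - 1 < a)
    (B : ℕ → ℝ)
    (hB : ∃ ε > 0, ∀ t : ℝ, t ≠ 0 → |t| < ε →
      HasSum (fun n : ℕ => B n * t ^ n / (n ! : ℝ))
        (hlMultiZeta r k (1 - Real.exp (-t)) a))
    (n : ℕ) :
    B n = ∑ m ∈ Fintype.piFinset (fun _ : Fin r => Finset.range (n + 1)),
      if Monotone m then
        (-1 : ℝ) ^ (n + Finset.univ.sup m) * ((Finset.univ.sup m)! : ℝ) *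
          (stirling2 n (Finset.univ.sup m) : ℝ) /
          ∏ j, (((m j : ℝ) + a - (r : ℝ) + ((j : ℕ) : ℝ) + 1) ^ (k j))
      else 0 := by
  obtain ⟨ε, hε, hBsum⟩ := hB
  have hlog2 : 0 < Real.log 2 := Real.log_pos one_lt_two
  have hmin : 0 < min ε (Real.log 2) := lt_min hε hlog2
  have key : ∀ m : ℕ,
      (B m - (∑ mm ∈ Fintype.piFinset (fun _ : Fin r => Finset.range (m + 1)),
        if Monotone mm then
          (-1 : ℝ) ^ (m + Finset.univ.sup mm) * ((Finset.univ.sup mm)! : ℝ) *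
            (stirling2 m (Finset.univ.sup mm) : ℝ) /
            ∏ j, (((mm j : ℝ) + a - (r : ℝ) + ((j : ℕ) : ℝ) + 1) ^ (k j))
        else 0)) / (m ! : ℝ) = 0 := by
    refine coeff_zero _ _ hmin fun t ht0 ht => ?_
    have h1 := hBsum t ht0 (lt_of_lt_of_le ht (min_le_left _ _))
    have h2 := main_hasSum r hr k a ha t ht0 (lt_of_lt_of_le ht (min_le_right _ _))
    have h3 := h1.sub h2
    rw [sub_self] at h3
    refine h3.congr_fun fun m => ?_
    have hm : (m ! : ℝ) ≠ 0 := Nat.cast_ne_zero.mpr (Nat.factorial_ne_zero m)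
    field_simp
  have hkey := key n
  have hm : (n ! : ℝ) ≠ 0 := Nat.cast_ne_zero.mpr (Nat.factorial_ne_zero n)
  have := div_eq_zero_iff.mp hkey
  rcases this with h | h
  · linarith [sub_eq_zero.mp h]
  · exact absurd h hm
end
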